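/- (BCD descent property.) Assume the BCD setting of the nl_context, with parameters τ, π, γ, λ, β > 0. Suppose the sequences {W_i^k}_{i∈[h]}, {U_i^k}_{i∈[h]}, {V_i^k}_{i∈[h−1]} satisfy, for every k ≥ 0: (1) U_h^{k+1} is a global minimizer of U ↦ (τ/2)‖U − W_h^k V_{h−1}^k‖² + (1/(2N))‖Y − (U)_hdmx‖²; (2) for each i ∈ [h], W_i^{k+1} ∈ Prox_{βλ‖·‖_{2,0}}(W_i^{k+1} − β∇_W Φ(W_i^{k+1}; U_i^{k+1}, V_{i−1}^k)), where Φ(W; U, V) := (τ/2)‖U − WV‖² + (γ/2)‖W‖²; (3) for each i ∈ [h−1], V_i^{k+1} is the global minimizer of V ↦ (τ/2)‖U_{i+1}^{k+1} − W_{i+1}^{k+1}V‖² + (π/2)‖V − (U_i^k)_{0/1}‖²; (4) for each i ∈ [h−1], U_i^{k+1} is a global minimizer of U ↦ (τ/2)‖U − W_i^k V_{i−1}^k‖² + (π/2)‖V_i^{k+1} − (U)_{0/1}‖² (here V_0^k := V_0 for all k). Then for every k ≥ 0: F(𝒲^{k+1}, 𝒰^{k+1}, 𝒱^{k+1}) −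 F(𝒲^k, 𝒰^k, 𝒱^k) ≤ −((γ − 1/β)/2) Σ_{i=1}^{h} ‖W_i^{k+1} − W_i^k‖² − (π/2) Σ_{i=1}^{h−1} ‖V_i^{k+1} − V_i^k‖². -/

import Mathlib

set_option autoImplicit false

open Matrix

/-- Squared Frobenius norm of a matrix. -/
noncomputable def frobSq {m n : ℕ} (W : Matrix (Fin m) (Fin n) ℝ) : ℝ :=
  ∑ i, ∑ j, (W i j) ^ 2

open Classical in
/-- `‖W‖_{2,0}`: the number of nonzero columns of `W`, as a real number. -/
noncomputable def norm20 {m n : ℕ} (W : Matrix (Fin m) (Fin n) ℝ) : ℝ :=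
  ((Finset.univ.filter fun j : Fin n => Wᵀ j ≠ 0).card : ℝ)

/-- The proximal operator (as a set of global minimizers):
`Prox_β G (H) = argmin_W { G(W) + (1/(2β))‖W − H‖² }`. -/
def ProxSet {m n : ℕ} (β : ℝ) (G : Matrix (Fin m) (Fin n) ℝ → ℝ)
    (H : Matrix (Fin m) (Fin n) ℝ) : Set (Matrix (Fin m) (Fin n) ℝ) :=
  {W | ∀ Z : Matrix (Fin m) (Fin n) ℝ,
    G W + (1 / (2 * β)) * frobSq (W - H) ≤ G Z + (1 / (2 * β)) * frobSq (Z - H)}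

/-- The step (0/1) function applied entrywise to a matrix. -/
noncomputable def stepM {a b : ℕ} (A : Matrix (Fin a) (Fin b) ℝ) :
    Matrix (Fin a) (Fin b) ℝ :=
  Matrix.of fun i j => if 0 < A i j then (1 : ℝ) else 0

/-- The hardmax of a matrix, applied columnwise: entry `(i,j)` is `1` if `A i j` is
the maximum of column `j`, and `0` otherwise. -/
noncomputable def hdmxM {a b : ℕ} (A : Matrix (Fin a) (Fin b) ℝ) :
    Matrix (Fin a) (Fin b) ℝ :=
  Matrix.of fun i j => if ∀ r, A r j ≤ A i j then (1 : ℝ) else 0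

noncomputable def fdot {m n : ℕ} (A B : Matrix (Fin m) (Fin n) ℝ) : ℝ :=
  ∑ i, ∑ j, A i j * B i j

lemma frobSq_nonneg {m n : ℕ} (A : Matrix (Fin m) (Fin n) ℝ) : 0 ≤ frobSq A :=
  Finset.sum_nonneg fun _ _ => Finset.sum_nonneg fun _ _ => sq_nonneg _

lemma frobSq_add_smul {m n : ℕ} (A B : Matrix (Fin m) (Fin n) ℝ) (t : ℝ) :
    frobSq (A + t • B) = frobSq A + 2*t*fdot A B + t^2 * frobSq B := by
  unfold frobSq fdot
  rw [Finset.mul_sum, Finset.mul_sum, ← Finset.sum_add_distrib, ← Finset.sum_add_distrib]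
  refine Finset.sum_congr rfl fun i _ => ?_
  rw [Finset.mul_sum, Finset.mul_sum, ← Finset.sum_add_distrib, ← Finset.sum_add_distrib]
  refine Finset.sum_congr rfl fun j _ => ?_
  simp only [Matrix.add_apply, Matrix.smul_apply, smul_eq_mul]
  ring

lemma frobSq_sub_smul {m n : ℕ} (A B : Matrix (Fin m) (Fin n) ℝ) (t : ℝ) :
    frobSq (A - t • B) = frobSq A - 2*t*fdot A B + t^2 * frobSq B := by
  rw [sub_eq_add_neg, ← neg_smul, frobSq_add_smul]; ring

lemma frobSq_add {m n : ℕ} (A B : Matrix (Fin m) (Fin n) ℝ) :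
    frobSq (A + B) = frobSq A + 2*fdot A B + frobSq B := by
  have := frobSq_add_smul A B 1
  rw [one_smul] at this
  linarith [this]

lemma frobSq_sub {m n : ℕ} (A B : Matrix (Fin m) (Fin n) ℝ) :
    frobSq (A - B) = frobSq A - 2*fdot A B + frobSq B := by
  have := frobSq_sub_smul A B 1
  rw [one_smul] at this
  linarith [this]

lemma frobSq_smul {m n : ℕ} (t : ℝ) (B : Matrix (Fin m) (Fin n) ℝ) :
    frobSq (t • B) = t^2 * frobSq B := by
  unfold frobSq
  rw [Finset.mul_sum]
  refine Finset.sum_congr rfl fun i _ => ?_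
  rw [Finset.mul_sum]
  refine Finset.sum_congr rfl fun j _ => ?_
  simp only [Matrix.smul_apply, smul_eq_mul]
  ring

lemma frobSq_sub_comm {m n : ℕ} (A B : Matrix (Fin m) (Fin n) ℝ) :
    frobSq (A - B) = frobSq (B - A) := by
  unfold frobSq
  refine Finset.sum_congr rfl fun i _ => Finset.sum_congr rfl fun j _ => ?_
  simp only [Matrix.sub_apply]
  ring

lemma fdot_comm {m n : ℕ} (A B : Matrix (Fin m) (Fin n) ℝ) : fdot A B = fdot B A := by
  unfold fdot
  exact Finset.sum_congr rfl fun i _ => Finset.sum_congr rfl fun j _ => mul_comm _ _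

lemma fdot_neg_left {m n : ℕ} (A B : Matrix (Fin m) (Fin n) ℝ) : fdot (-A) B = - fdot A B := by
  simp [fdot, Matrix.neg_apply, Finset.sum_neg_distrib]

lemma fdot_right_lin {m n : ℕ} (D X Yy : Matrix (Fin m) (Fin n) ℝ) (s t : ℝ) :
    fdot D (s • X + t • Yy) = s * fdot D X + t * fdot D Yy := by
  unfold fdot
  rw [Finset.mul_sum, Finset.mul_sum, ← Finset.sum_add_distrib]
  refine Finset.sum_congr rfl fun i _ => ?_
  rw [Finset.mul_sum, Finset.mul_sum, ← Finset.sum_add_distrib]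
  refine Finset.sum_congr rfl fun j _ => ?_
  simp only [Matrix.add_apply, Matrix.smul_apply, smul_eq_mul]
  ring

lemma fdot_mulT {m n p : ℕ} (D : Matrix (Fin m) (Fin n) ℝ)
    (B : Matrix (Fin m) (Fin p) ℝ) (Vm : Matrix (Fin n) (Fin p) ℝ) :
    fdot D (B * Vmᵀ) = fdot (D * Vm) B := by
  simp only [fdot, Matrix.mul_apply, Matrix.transpose_apply, Finset.mul_sum, Finset.sum_mul]
  refine Finset.sum_congr rfl fun i _ => ?_
  rw [Finset.sum_comm]
  exact Finset.sum_congr rfl fun l _ => Finset.sum_congr rfl fun j _ => by ring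

lemma aux_zero (a b : ℝ) (hb : 0 ≤ b) (ht : ∀ t : ℝ, 0 ≤ t * a + t^2 * b) : a = 0 := by
  have hb1 : (0:ℝ) < b + 1 := by linarith
  set c := a / (b+1) with hcdef
  have hc : c * (b+1) = a := div_mul_cancel₀ _ (ne_of_gt hb1)
  have h1 := ht (-c)
  rw [← hc] at h1
  have hc2 : c ^ 2 ≤ 0 := by nlinarith [h1]
  have hc0 : c = 0 := by
    have h3 : c ^ 2 = 0 := le_antisymm hc2 (sq_nonneg _)
    exact pow_eq_zero_iff (by norm_num) |>.mp h3
  rw [← hc, hc0, zero_mul]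

lemma sum_split_shift (n : ℕ) (g : ℕ → ℝ) :
    ∑ i ∈ Finset.Icc 1 (n+1), g i = g 1 + ∑ i ∈ Finset.Icc 1 n, g (i+1) := by
  induction n with
  | zero => simp
  | succ m ih =>
      rw [Finset.sum_Icc_succ_top (by omega), ih, Finset.sum_Icc_succ_top (by omega : 1 ≤ m+1)]
      ring

lemma Vblock {m n p : ℕ} (τ π : ℝ) (hτ : 0 < τ) (hπ : 0 < π)
    (Wm : Matrix (Fin m) (Fin n) ℝ) (Um : Matrix (Fin m) (Fin p) ℝ)
    (S Vs Vk : Matrix (Fin n) (Fin p) ℝ)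
    (hmin : ∀ Z : Matrix (Fin n) (Fin p) ℝ,
      τ/2 * frobSq (Um - Wm * Vs) + π/2 * frobSq (Vs - S) ≤
      τ/2 * frobSq (Um - Wm * Z) + π/2 * frobSq (Z - S)) :
    τ/2 * frobSq (Um - Wm * Vs) + π/2 * frobSq (Vs - S) + π/2 * frobSq (Vs - Vk) ≤
    τ/2 * frobSq (Um - Wm * Vk) + π/2 * frobSq (Vk - S) := by
  have expand : ∀ t : ℝ,
      τ/2 * frobSq (Um - Wm * (Vs + t • (Vk - Vs))) + π/2 * frobSq (Vs + t • (Vk - Vs) - S)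
      = τ/2 * frobSq (Um - Wm * Vs) + π/2 * frobSq (Vs - S)
        + (t * (π * fdot (Vs - S) (Vk - Vs) - τ * fdot (Um - Wm * Vs) (Wm * (Vk - Vs)))
        + t^2 * (τ/2 * frobSq (Wm * (Vk - Vs)) + π/2 * frobSq (Vk - Vs))) := by
    intro t
    rw [show Um - Wm * (Vs + t • (Vk - Vs)) = (Um - Wm * Vs) - t • (Wm * (Vk - Vs)) by
          rw [Matrix.mul_add, Matrix.mul_smul, sub_add_eq_sub_sub],
        show Vs + t • (Vk - Vs) - S = (Vs - S) + t • (Vk - Vs) from add_sub_right_comm _ _ _,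
        frobSq_sub_smul, frobSq_add_smul]
    ring
  have ht : ∀ t : ℝ,
      0 ≤ t * (π * fdot (Vs - S) (Vk - Vs) - τ * fdot (Um - Wm * Vs) (Wm * (Vk - Vs)))
        + t^2 * (τ/2 * frobSq (Wm * (Vk - Vs)) + π/2 * frobSq (Vk - Vs)) := by
    intro t
    have hmt := hmin (Vs + t • (Vk - Vs))
    rw [expand t] at hmt
    linarith
  have hb : 0 ≤ τ/2 * frobSq (Wm * (Vk - Vs)) + π/2 * frobSq (Vk - Vs) := by
    have h1 := frobSq_nonneg (Wm * (Vk - Vs))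
    have h2 := frobSq_nonneg (Vk - Vs)
    nlinarith
  have ha := aux_zero _ _ hb ht
  have h1 := expand 1
  rw [one_smul, show Vs + (Vk - Vs) = Vk by abel, ha] at h1
  have h2 : 0 ≤ τ/2 * frobSq (Wm * (Vk - Vs)) :=
    mul_nonneg (by linarith) (frobSq_nonneg _)
  rw [frobSq_sub_comm Vs Vk]
  linarith [h1, h2]

lemma Wblock {m n p : ℕ} (τ γ lam β : ℝ) (hτ : 0 < τ) (hβ : 0 < β)
    (Wp Wc : Matrix (Fin m) (Fin n) ℝ) (Vm : Matrix (Fin n) (Fin p) ℝ)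
    (Up : Matrix (Fin m) (Fin p) ℝ)
    (hprox : Wp ∈ ProxSet β (fun Z => lam * norm20 Z)
      (Wp - β • (τ • ((Wp * Vm - Up) * Vmᵀ) + γ • Wp))) :
    lam * norm20 Wp + γ/2 * frobSq Wp + τ/2 * frobSq (Up - Wp * Vm)
      + (γ - 1/β)/2 * frobSq (Wp - Wc)
    ≤ lam * norm20 Wc + γ/2 * frobSq Wc + τ/2 * frobSq (Up - Wc * Vm) := by
  obtain ⟨G, hG⟩ : ∃ G, τ • ((Wp * Vm - Up) * Vmᵀ) + γ • Wp = G := ⟨_, rfl⟩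
  rw [hG] at hprox
  have h0 := hprox Wc
  dsimp only at h0
  have e1 : Wp - (Wp - β • G) = β • G := sub_sub_cancel _ _
  have e2 : Wc - (Wp - β • G) = (Wc - Wp) + β • G := by
    rw [sub_sub_eq_add_sub, add_sub_right_comm]
  rw [e1, e2, frobSq_smul, frobSq_add_smul] at h0
  have hbne : β ≠ 0 := ne_of_gt hβ
  have c1 : (1/(2*β)) * (β^2 * frobSq G) = (β/2) * frobSq G := by field_simp
  have c2 : (1/(2*β)) * (frobSq (Wc - Wp) + 2*β*fdot (Wc - Wp) G + β^2 * frobSq G)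
      = (1/(2*β)) * frobSq (Wc - Wp) + fdot (Wc - Wp) G + (β/2) * frobSq G := by
    field_simp
  rw [c1, c2] at h0
  have key : fdot (Wc - Wp) G
      = (τ/2 * frobSq (Up - Wc * Vm) + γ/2 * frobSq Wc)
        - (τ/2 * frobSq (Up - Wp * Vm) + γ/2 * frobSq Wp)
        - τ/2 * frobSq ((Wc - Wp) * Vm) - γ/2 * frobSq (Wc - Wp) := by
    have k1 : fdot (Wc - Wp) G
        = τ * fdot ((Wc - Wp) * Vm) (Wp * Vm - Up) + γ * fdot (Wc - Wp) Wp := by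
      rw [← hG, fdot_right_lin, fdot_mulT]
    have k2 : Up - Wc * Vm = (Up - Wp * Vm) - (Wc - Wp) * Vm := by
      rw [Matrix.sub_mul]; abel
    have k3 := frobSq_sub (Up - Wp * Vm) ((Wc - Wp) * Vm)
    have k4 : frobSq Wc = frobSq Wp + 2 * fdot Wp (Wc - Wp) + frobSq (Wc - Wp) := by
      have e : Wp + (Wc - Wp) = Wc := by abel
      nth_rewrite 1 [← e]
      rw [frobSq_add]
    have k5 : fdot ((Wc - Wp) * Vm) (Wp * Vm - Up) = - fdot (Up - Wp * Vm) ((Wc - Wp) * Vm) := by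
      rw [fdot_comm, show Wp * Vm - Up = -(Up - Wp * Vm) from (neg_sub _ _).symm, fdot_neg_left]
    rw [k1, k5, k4, k2, k3, fdot_comm Wp (Wc - Wp)]
    ring
  rw [key] at h0
  have hpos : 0 ≤ τ/2 * frobSq ((Wc - Wp) * Vm) :=
    mul_nonneg (by linarith) (frobSq_nonneg _)
  rw [show frobSq (Wp - Wc) = frobSq (Wc - Wp) from frobSq_sub_comm _ _]
  have hβinv : (1:ℝ)/(2*β) = (1/β)/2 := by ring
  rw [hβinv] at h0
  linarith [h0, hpos]

/-- BCD descent property: if the BCD iterates satisfy the update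
conditions (1)–(4), then the objective `F` decreases by at least
`((γ − 1/β)/2) Σᵢ‖Wᵢ^{k+1} − Wᵢ^k‖² + (π/2) Σᵢ‖Vᵢ^{k+1} − Vᵢ^k‖²` at each step. -/
theorem BCD_descent_property
    (h N : ℕ) (hh : 1 ≤ h) (hN : 1 ≤ N)
    (d : ℕ → ℕ) (hd : ∀ i, 1 ≤ d i)
    (Y : Matrix (Fin (d h)) (Fin N) ℝ) (V0 : Matrix (Fin (d 0)) (Fin N) ℝ)
    (τ π γ lam β : ℝ)
    (hτ : 0 < τ) (hπ : 0 < π) (hγ : 0 < γ) (hlam : 0 < lam) (hβ : 0 < β)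
    (W : ℕ → (i : ℕ) → Matrix (Fin (d i)) (Fin (d (i - 1))) ℝ)
    (U : ℕ → (i : ℕ) → Matrix (Fin (d i)) (Fin N) ℝ)
    (V : ℕ → (i : ℕ) → Matrix (Fin (d i)) (Fin N) ℝ)
    (hV0 : ∀ k, V k 0 = V0)
    (F : ((i : ℕ) → Matrix (Fin (d i)) (Fin (d (i - 1))) ℝ) →
      ((i : ℕ) → Matrix (Fin (d i)) (Fin N) ℝ) →
      ((i : ℕ) → Matrix (Fin (d i)) (Fin N) ℝ) → ℝ)
    (hF : F = fun Wf Uf Vf =>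
      (1 / (2 * (N : ℝ))) * frobSq (Y - hdmxM (Uf h)) +
      (∑ i ∈ Finset.Icc 1 h, (lam * norm20 (Wf i) + (γ / 2) * frobSq (Wf i))) +
      (τ / 2) * (∑ i ∈ Finset.Icc 1 h, frobSq (Uf i - Wf i * Vf (i - 1))) +
      (π / 2) * (∑ i ∈ Finset.Icc 1 (h - 1), frobSq (Vf i - stepM (Uf i))))
    -- (1): `U_h^{k+1}` globally minimizes its subproblem
    (hUh : ∀ k, ∀ Z : Matrix (Fin (d h)) (Fin N) ℝ,
      (τ / 2) * frobSq (U (k + 1) h - W k h * V k (h - 1)) +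
          (1 / (2 * (N : ℝ))) * frobSq (Y - hdmxM (U (k + 1) h)) ≤
        (τ / 2) * frobSq (Z - W k h * V k (h - 1)) +
          (1 / (2 * (N : ℝ))) * frobSq (Y - hdmxM Z))
    -- (2): `W_i^{k+1}` satisfies the proximal fixed-point inclusion, with
    -- `∇_W Φ(W; U, V) = τ(WV − U)Vᵀ + γW` for `Φ(W;U,V) = (τ/2)‖U−WV‖² + (γ/2)‖W‖²`
    (hWup : ∀ k, ∀ i ∈ Finset.Icc 1 h,
      W (k + 1) i ∈ ProxSet β (fun Z => lam * norm20 Z)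
        (W (k + 1) i - β •
          (τ • ((W (k + 1) i * V k (i - 1) - U (k + 1) i) * (V k (i - 1))ᵀ) +
            γ • W (k + 1) i)))
    -- (3): `V_i^{k+1}` globally minimizes its subproblem (indexed here by
    -- `i ∈ {2, …, h}`, i.e. the subproblem of `V_{i−1}^{k+1}` for `i−1 ∈ [h−1]`)
    (hVup : ∀ k, ∀ i ∈ Finset.Icc 2 h, ∀ Z : Matrix (Fin (d (i - 1))) (Fin N) ℝ,
      (τ / 2) * frobSq (U (k + 1) i - W (k + 1) i * V (k + 1) (i - 1)) +
          (π / 2) * frobSq (V (k + 1) (i - 1) - stepM (U k (i - 1))) ≤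
        (τ / 2) * frobSq (U (k + 1) i - W (k + 1) i * Z) +
          (π / 2) * frobSq (Z - stepM (U k (i - 1))))
    -- (4): `U_i^{k+1}` globally minimizes its subproblem
    (hUup : ∀ k, ∀ i ∈ Finset.Icc 1 (h - 1), ∀ Z : Matrix (Fin (d i)) (Fin N) ℝ,
      (τ / 2) * frobSq (U (k + 1) i - W k i * V k (i - 1)) +
          (π / 2) * frobSq (V (k + 1) i - stepM (U (k + 1) i)) ≤
        (τ / 2) * frobSq (Z - W k i * V k (i - 1)) +
          (π / 2) * frobSq (V (k + 1) i - stepM Z)) :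
    ∀ k : ℕ,
      F (W (k + 1)) (U (k + 1)) (V (k + 1)) - F (W k) (U k) (V k) ≤
        -((γ - 1 / β) / 2) *
            (∑ i ∈ Finset.Icc 1 h, frobSq (W (k + 1) i - W k i)) -
          (π / 2) * (∑ i ∈ Finset.Icc 1 (h - 1), frobSq (V (k + 1) i - V k i)) := by
  obtain ⟨h', rfl⟩ : ∃ h'', h = h'' + 1 := ⟨h - 1, (Nat.succ_pred_eq_of_pos hh).symm⟩
  subst hF
  intro k
  simp only [Nat.add_sub_cancel]
  -- (1)
  have H1 : τ / 2 * frobSq (U (k + 1) (h' + 1) - W k (h' + 1) * V k (h' + 1 - 1))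
        + 1 / (2 * (N : ℝ)) * frobSq (Y - hdmxM (U (k + 1) (h' + 1)))
      ≤ τ / 2 * frobSq (U k (h' + 1) - W k (h' + 1) * V k (h' + 1 - 1))
        + 1 / (2 * (N : ℝ)) * frobSq (Y - hdmxM (U k (h' + 1))) := hUh k (U k (h' + 1))
  -- (2)
  have H2 : ∑ i ∈ Finset.Icc 1 (h' + 1),
        ((lam * norm20 (W (k + 1) i) + γ / 2 * frobSq (W (k + 1) i))
          + (τ / 2 * frobSq (U (k + 1) i - W (k + 1) i * V k (i - 1))
          + (γ - 1 / β) / 2 * frobSq (W (k + 1) i - W k i)))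
      ≤ ∑ i ∈ Finset.Icc 1 (h' + 1),
        ((lam * norm20 (W k i) + γ / 2 * frobSq (W k i))
          + τ / 2 * frobSq (U (k + 1) i - W k i * V k (i - 1))) := by
    refine Finset.sum_le_sum fun i hi => ?_
    have := Wblock τ γ lam β hτ hβ (W (k + 1) i) (W k i) (V k (i - 1)) (U (k + 1) i)
      (hWup k i hi)
    linarith
  -- (3)
  have H3 : ∑ i ∈ Finset.Icc 1 h',
        (τ / 2 * frobSq (U (k + 1) (i + 1) - W (k + 1) (i + 1) * V (k + 1) (i + 1 - 1))
          + π / 2 * frobSq (V (k + 1) i - stepM (U k i))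
          + π / 2 * frobSq (V (k + 1) i - V k i))
      ≤ ∑ i ∈ Finset.Icc 1 h',
        (τ / 2 * frobSq (U (k + 1) (i + 1) - W (k + 1) (i + 1) * V k (i + 1 - 1))
          + π / 2 * frobSq (V k i - stepM (U k i))) := by
    refine Finset.sum_le_sum fun i hi => ?_
    have hm : i + 1 ∈ Finset.Icc 2 (h' + 1) := by
      simp only [Finset.mem_Icc] at hi ⊢; omega
    exact Vblock τ π hτ hπ (W (k + 1) (i + 1)) (U (k + 1) (i + 1)) (stepM (U k i))
      (V (k + 1) i) (V k i) (hVup k (i + 1) hm)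
  -- (4)
  have H4 : ∑ i ∈ Finset.Icc 1 h',
        (τ / 2 * frobSq (U (k + 1) i - W k i * V k (i - 1))
          + π / 2 * frobSq (V (k + 1) i - stepM (U (k + 1) i)))
      ≤ ∑ i ∈ Finset.Icc 1 h',
        (τ / 2 * frobSq (U k i - W k i * V k (i - 1))
          + π / 2 * frobSq (V (k + 1) i - stepM (U k i))) := by
    refine Finset.sum_le_sum fun i hi => ?_
    exact hUup k i hi (U k i)
  -- sum splitting identities
  have E1 : ∑ i ∈ Finset.Icc 1 (h' + 1), frobSq (U (k + 1) i - W k i * V k (i - 1))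
      = (∑ i ∈ Finset.Icc 1 h', frobSq (U (k + 1) i - W k i * V k (i - 1)))
        + frobSq (U (k + 1) (h' + 1) - W k (h' + 1) * V k (h' + 1 - 1)) :=
    Finset.sum_Icc_succ_top (by omega) _
  have E2 : ∑ i ∈ Finset.Icc 1 (h' + 1), frobSq (U k i - W k i * V k (i - 1))
      = (∑ i ∈ Finset.Icc 1 h', frobSq (U k i - W k i * V k (i - 1)))
        + frobSq (U k (h' + 1) - W k (h' + 1) * V k (h' + 1 - 1)) :=
    Finset.sum_Icc_succ_top (by omega) _
  have E3 : ∑ i ∈ Finset.Icc 1 (h' + 1), frobSq (U (k + 1) i - W (k + 1) i * V k (i - 1))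
      = frobSq (U (k + 1) 1 - W (k + 1) 1 * V k 0)
        + ∑ i ∈ Finset.Icc 1 h', frobSq (U (k + 1) (i + 1) - W (k + 1) (i + 1) * V k (i + 1 - 1)) :=
    sum_split_shift h' _
  have E4 : ∑ i ∈ Finset.Icc 1 (h' + 1), frobSq (U (k + 1) i - W (k + 1) i * V (k + 1) (i - 1))
      = frobSq (U (k + 1) 1 - W (k + 1) 1 * V (k + 1) 0)
        + ∑ i ∈ Finset.Icc 1 h', frobSq (U (k + 1) (i + 1) - W (k + 1) (i + 1) * V (k + 1) (i + 1 - 1)) :=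
    sum_split_shift h' _
  have Ev : frobSq (U (k + 1) 1 - W (k + 1) 1 * V (k + 1) 0)
      = frobSq (U (k + 1) 1 - W (k + 1) 1 * V k 0) := by
    rw [hV0 (k + 1), hV0 k]
  simp only [Finset.sum_add_distrib, ← Finset.mul_sum] at H2 H3 H4 ⊢
  rw [E1, E3] at H2
  rw [E2, E4, Ev]
  linarith [H1, H2, H3, H4]
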